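/- Let b < a be real numbers and let f : ℝ → ℝ be differentiable on [b,a] with f(a) > 0 and f'(t) ≤ -f(t)²/4 for all t ∈ [b,a]. Then b > a - 4/f(a). (Hence a solution of the Raychaudhuri inequality with positive expansion at a point cannot be continued for proper time 4/f(a) to the past: the expansion must blow up to +∞ before then.) -/
import Mathlib


/-- Raychaudhuri comparison: a solution of `f' ≤ -f²/4` with `f a > 0` must blow up
to `+∞` before proper time `4/(f a)` to the past of `a`. -/
theorem raychaudhuri_blowup_past
    (a b : ℝ) (hab : b < a) (f f' : ℝ → ℝ)
    (hderiv : ∀ t ∈ Set.Icc b a, HasDerivAt f (f' t) t)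
    (hfa : 0 < f a)
    (hineq : ∀ t ∈ Set.Icc b a, f' t ≤ -(f t) ^ 2 / 4) :
    b > a - 4 / f a := by
  have hcont : ContinuousOn f (Set.Icc b a) :=
    fun t ht => (hderiv t ht).continuousAt.continuousWithinAt
  have hfpos : ∀ t ∈ Set.Icc b a, 0 < f t := by
    have hanti : AntitoneOn f (Set.Icc b a) := by
      apply antitoneOn_of_deriv_nonpos (convex_Icc b a) hcont
      · intro t ht
        rw [interior_Icc] at ht
        exact ((hderiv t (Set.Ioo_subset_Icc_self ht)).differentiableAt).differentiableWithinAt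
      · intro t ht
        rw [interior_Icc] at ht
        rw [(hderiv t (Set.Ioo_subset_Icc_self ht)).deriv]
        have := hineq t (Set.Ioo_subset_Icc_self ht)
        nlinarith [sq_nonneg (f t)]
    intro t ht
    have := hanti ht (Set.right_mem_Icc.mpr hab.le) ht.2
    linarith
  set g : ℝ → ℝ := fun t => (f t)⁻¹ - t / 4 with hg
  have hg' : ∀ t ∈ Set.Icc b a, HasDerivAt g (-f' t / f t ^ 2 - 1 / 4) t := by
    intro t ht
    exact ((hderiv t ht).inv (hfpos t ht).ne').sub ((hasDerivAt_id t).div_const 4)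
  have hmono : MonotoneOn g (Set.Icc b a) := by
    apply monotoneOn_of_deriv_nonneg (convex_Icc b a)
    · exact fun t ht => ((hg' t ht).continuousAt).continuousWithinAt
    · intro t ht
      rw [interior_Icc] at ht
      exact ((hg' t (Set.Ioo_subset_Icc_self ht)).differentiableAt).differentiableWithinAt
    · intro t ht
      rw [interior_Icc] at ht
      have ht' := Set.Ioo_subset_Icc_self ht
      rw [(hg' t ht').deriv]
      have h1 := hineq t ht'
      have h2 := hfpos t ht'
      have h3 : (1:ℝ)/4 ≤ -f' t / f t ^ 2 := by
        rw [le_div_iff₀ (by positivity)]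
        nlinarith
      linarith
  have hgb := hmono (Set.left_mem_Icc.mpr hab.le) (Set.right_mem_Icc.mpr hab.le) hab.le
  have hfb := hfpos b (Set.left_mem_Icc.mpr hab.le)
  simp only [hg] at hgb
  have h1 : 0 < (f b)⁻¹ := by positivity
  rw [gt_iff_lt, sub_lt_iff_lt_add, div_eq_mul_inv]
  linarith
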